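/- For any two density matrices ρ and σ on a finite-dimensional complex Hilbert space, the incompatibility measure satisfies Φ(ρ,σ) ≤ 1, i.e. 2·Tr([ρ,σ]†[ρ,σ]) ≤ 1. -/

import Mathlib

open Matrix ComplexOrder

/-- A density matrix: positive semidefinite with unit trace. -/
def IsDensityMatrix {n : ℕ} (ρ : Matrix (Fin n) (Fin n) ℂ) : Prop :=
  ρ.PosSemidef ∧ ρ.trace = 1

/-- The incompatibility measure Φ(ρ,σ) := 2‖[ρ,σ]‖²_HS = 2·Tr([ρ,σ]†[ρ,σ]). -/
noncomputable def Phi {n : ℕ} (ρ σ : Matrix (Fin n) (Fin n) ℂ) : ℝ :=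
  2 * (((ρ * σ - σ * ρ)ᴴ * (ρ * σ - σ * ρ)).trace).re

lemma aux_diag_im_zero {n : ℕ} {M : Matrix (Fin n) (Fin n) ℂ} (hM : M.IsHermitian) (i : Fin n) :
    (M i i).im = 0 := by
  have := hM.coe_re_apply_self i
  rw [← this]; simp

lemma aux_diag_re_nonneg {n : ℕ} {M : Matrix (Fin n) (Fin n) ℂ} (hM : M.PosSemidef) (i : Fin n) :
    0 ≤ (M i i).re := by
  have h := hM.dotProduct_mulVec_nonneg (Pi.single i 1)
  simp only [← Pi.single_star, Matrix.mulVec_single, single_dotProduct, star_one, one_mul,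
    Pi.smul_apply, op_smul_eq_mul, Matrix.col_apply,
    mul_one] at h
  exact (Complex.le_def.mp h).1

lemma aux_entry_sq_le {n : ℕ} {M : Matrix (Fin n) (Fin n) ℂ} (hM : M.PosSemidef) (i j : Fin n) :
    Complex.normSq (M i j) ≤ (M i i).re * (M j j).re := by
  rcases eq_or_ne i j with rfl | hij
  · have him := aux_diag_im_zero hM.1 i
    rw [Complex.normSq_apply, him]
    ring_nf
    exact le_refl _
  · have hji : M j i = starRingEnd ℂ (M i j) := by
      have := hM.1.apply j i
      simpa [Complex.star_def] using this.symm
    have him := aux_diag_im_zero hM.1 i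
    have hjm := aux_diag_im_zero hM.1 j
    have key : ∀ t : ℝ, 0 ≤ ((M i i).re * Complex.normSq (M i j)) * (t * t) +
        (-(2 * Complex.normSq (M i j))) * t + (M j j).re := by
      intro t
      have h := hM.dotProduct_mulVec_nonneg (Pi.single i (-(t:ℂ) * M i j) + Pi.single j 1)
      simp only [star_add, mulVec_add, dotProduct_add, add_dotProduct, Matrix.mulVec_single,
        ← Pi.single_star, single_dotProduct, Pi.smul_apply, op_smul_eq_mul,
        Matrix.col_apply] at h
      have h' := (Complex.le_def.mp h).1
      rw [hji] at h'
      simp only [Complex.add_re, Complex.mul_re, Complex.mul_im, Complex.zero_re, star_mul',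
        Complex.neg_re, Complex.neg_im, Complex.ofReal_re, Complex.ofReal_im, star_one,
        Complex.conj_re, Complex.conj_im, Complex.one_re, Complex.one_im, RCLike.star_def] at h'
      simp only [Complex.normSq_apply]
      nlinarith [h']
    have hd := discrim_le_zero key
    rw [discrim] at hd
    have h1 := aux_diag_re_nonneg hM i
    have h2 := aux_diag_re_nonneg hM j
    rcases eq_or_lt_of_le (Complex.normSq_nonneg (M i j)) with h0 | h0
    · rw [← h0]; positivity
    · nlinarith [hd]

lemma aux_sum_bound {n : ℕ} (p s : Fin n → ℝ) (hp0 : ∀ i, 0 ≤ p i) (hp1 : ∀ i, p i ≤ 1)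
    (hs0 : ∀ i, 0 ≤ s i) (hs1 : ∑ i, s i = 1) :
    ∑ i, ∑ j, (p i - p j)^2 * (s i * s j) ≤ 1/2 := by
  have key : ∀ i j : Fin n, (p i - p j)^2 * (s i * s j)
      = (s i * p i^2) * s j + s i * (s j * p j^2) - 2 * ((s i * p i) * (s j * p j)) := by
    intros; ring
  have expand : ∑ i, ∑ j, (p i - p j)^2 * (s i * s j)
      = (∑ i, s i * p i^2) * (∑ j, s j) + (∑ i, s i) * (∑ j, s j * p j^2)
        - 2 * ((∑ i, s i * p i) * (∑ j, s j * p j)) := by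
    simp only [key, Finset.sum_sub_distrib, Finset.sum_add_distrib, ← Finset.sum_mul,
      ← Finset.mul_sum]
  rw [expand, hs1]
  have hAT : (∑ i, s i * p i^2) ≤ ∑ i, s i * p i := by
    apply Finset.sum_le_sum
    intro i _
    have h : p i ^ 2 ≤ p i := by nlinarith [hp0 i, hp1 i]
    exact mul_le_mul_of_nonneg_left h (hs0 i)
  have hT0 : 0 ≤ ∑ i, s i * p i :=
    Finset.sum_nonneg fun i _ => mul_nonneg (hs0 i) (hp0 i)
  nlinarith [sq_nonneg (1 - 2 * ∑ i, s i * p i)]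

lemma aux_trace_conjTranspose_mul_re {n : ℕ} (C : Matrix (Fin n) (Fin n) ℂ) :
    ((Cᴴ * C).trace).re = ∑ j, ∑ i, Complex.normSq (C i j) := by
  rw [Matrix.trace, Complex.re_sum]
  refine Finset.sum_congr rfl fun j _ => ?_
  rw [Matrix.diag_apply, Matrix.mul_apply, Complex.re_sum]
  refine Finset.sum_congr rfl fun i _ => ?_
  rw [Matrix.conjTranspose_apply, Complex.star_def, Complex.conj_mul']
  rw [← Complex.ofReal_pow, Complex.ofReal_re, Complex.normSq_eq_norm_sq]

theorem phi_le_one {n : ℕ} (ρ σ : Matrix (Fin n) (Fin n) ℂ)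
    (hρ : IsDensityMatrix ρ) (hσ : IsDensityMatrix σ) :
    Phi ρ σ ≤ 1 := by
  have hH := hρ.1.1
  set U : Matrix (Fin n) (Fin n) ℂ :=
    (Matrix.IsHermitian.eigenvectorUnitary hH : Matrix (Fin n) (Fin n) ℂ) with hUdef
  have hU1 : U * star U = 1 :=
    (Matrix.mem_unitaryGroup_iff).mp (Matrix.IsHermitian.eigenvectorUnitary hH).2
  have hU2 : star U * U = 1 :=
    (Matrix.mem_unitaryGroup_iff').mp (Matrix.IsHermitian.eigenvectorUnitary hH).2
  set p : Fin n → ℝ := hH.eigenvalues with hpdef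
  set D : Matrix (Fin n) (Fin n) ℂ := Matrix.diagonal (fun i => (p i : ℂ)) with hDdef
  have hspec : ρ = U * D * star U := by
    have := hH.spectral_theorem
    rw [Unitary.conjStarAlgAut_apply] at this
    exact this
  set τ : Matrix (Fin n) (Fin n) ℂ := star U * σ * U with hτdef
  have hτpsd : τ.PosSemidef := by
    have := hσ.1.conjTranspose_mul_mul_same U
    simpa [Matrix.star_eq_conjTranspose, hτdef] using this
  have hσeq : σ = U * τ * star U := by
    rw [hτdef]
    calc σ = (U * star U) * σ * (U * star U) := by rw [hU1]; simp
    _ = U * (star U * σ * U) * star U := by noncomm_ring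
  -- commutator conjugation
  have e1 : (U * D * star U) * (U * τ * star U) = U * (D * τ) * star U := by
    calc (U * D * star U) * (U * τ * star U) = U * D * (star U * U) * τ * star U := by
          noncomm_ring
    _ = U * (D * τ) * star U := by rw [hU2]; noncomm_ring
  have e2 : (U * τ * star U) * (U * D * star U) = U * (τ * D) * star U := by
    calc (U * τ * star U) * (U * D * star U) = U * τ * (star U * U) * D * star U := by
          noncomm_ring
    _ = U * (τ * D) * star U := by rw [hU2]; noncomm_ring
  set C : Matrix (Fin n) (Fin n) ℂ := D * τ - τ * D with hCdef
  have hcomm : ρ * σ - σ * ρ = U * C * star U := by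
    rw [hCdef]
    conv_lhs => rw [hspec]
    conv_lhs => rw [hσeq]
    rw [e1, e2]
    noncomm_ring
  -- trace reduction
  have htr : ((ρ * σ - σ * ρ)ᴴ * (ρ * σ - σ * ρ)).trace = (Cᴴ * C).trace := by
    rw [hcomm]
    have hct : (U * C * star U)ᴴ = U * Cᴴ * star U := by
      simp [Matrix.conjTranspose_mul, Matrix.star_eq_conjTranspose, Matrix.mul_assoc]
    rw [hct]
    have e3 : (U * Cᴴ * star U) * (U * C * star U) = U * (Cᴴ * C) * star U := by
      calc (U * Cᴴ * star U) * (U * C * star U) = U * Cᴴ * (star U * U) * C * star U := by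
            noncomm_ring
      _ = U * (Cᴴ * C) * star U := by rw [hU2]; noncomm_ring
    rw [e3, Matrix.trace_mul_cycle, ← Matrix.mul_assoc, hU2, Matrix.one_mul]
  -- entrywise formula for C
  have hCentry : ∀ i j, C i j = ((p i : ℂ) - (p j : ℂ)) * τ i j := by
    intro i j
    rw [hCdef, hDdef]
    simp [Matrix.sub_apply, Matrix.diagonal_mul, Matrix.mul_diagonal, sub_mul, mul_comm]
  -- eigenvalue facts
  have hp0 : ∀ i, 0 ≤ p i := fun i => hρ.1.eigenvalues_nonneg i
  have hpsum : ∑ i, p i = 1 := by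
    have h1 : ρ.trace = D.trace := by
      rw [hspec, Matrix.trace_mul_cycle, hU2, Matrix.one_mul]
    rw [hρ.2] at h1
    have h2 : D.trace = ((∑ i, p i : ℝ) : ℂ) := by
      rw [hDdef, Matrix.trace_diagonal]
      push_cast
      rfl
    rw [h2] at h1
    exact_mod_cast h1.symm
  have hp1 : ∀ i, p i ≤ 1 := by
    intro i
    rw [← hpsum]
    exact Finset.single_le_sum (fun j _ => hp0 j) (Finset.mem_univ i)
  -- diagonal of τ
  set s : Fin n → ℝ := fun i => (τ i i).re with hsdef
  have hs0 : ∀ i, 0 ≤ s i := fun i => aux_diag_re_nonneg hτpsd i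
  have hssum : ∑ i, s i = 1 := by
    have h1 : τ.trace = 1 := by
      rw [hτdef, Matrix.trace_mul_cycle, hU1, Matrix.one_mul, hσ.2]
    have h2 : (τ.trace).re = ∑ i, s i := by
      rw [Matrix.trace, Complex.re_sum]
      rfl
    rw [h1] at h2
    simpa using h2.symm
  -- put it together
  have hPhi : Phi ρ σ = 2 * ∑ j, ∑ i, (p i - p j)^2 * Complex.normSq (τ i j) := by
    rw [Phi, htr, aux_trace_conjTranspose_mul_re]
    congr 1
    refine Finset.sum_congr rfl fun j _ => Finset.sum_congr rfl fun i _ => ?_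
    rw [hCentry i j, Complex.normSq_mul]
    congr 1
    rw [← Complex.ofReal_sub, Complex.normSq_ofReal, sq]
  rw [hPhi]
  have hbound : ∑ j, ∑ i, (p i - p j)^2 * Complex.normSq (τ i j) ≤ 1/2 := by
    calc ∑ j, ∑ i, (p i - p j)^2 * Complex.normSq (τ i j)
        ≤ ∑ j, ∑ i, (p i - p j)^2 * (s i * s j) := by
          refine Finset.sum_le_sum fun j _ => Finset.sum_le_sum fun i _ => ?_
          refine mul_le_mul_of_nonneg_left ?_ (sq_nonneg _)
          exact aux_entry_sq_le hτpsd i j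
      _ = ∑ i, ∑ j, (p i - p j)^2 * (s i * s j) := by
          rw [Finset.sum_comm]
      _ ≤ 1/2 := aux_sum_bound p s hp0 hp1 hs0 hssum
  linarith
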